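/- In Z[R_8], with e_i = a_i - a_0, the elements u_1 = e_1 - e_2 - e_7, u_2 = e_2 + e_6, u_3 = e_3 - e_4 - e_7, u_4 = e_4 + 2e_6, u_5 = e_5 - e_6 - e_7, u_6 = 4e_6 all lie in Δ²(R_8), the Z-span of all products e_i·e_j. -/
import Mathlib


/-- Dihedral quandle operation on `ZMod n`: `a · b = 2b - a`. -/
def dq (n : ℕ) (a b : ZMod n) : ZMod n := 2 * b - a

/-- Quandle ring multiplication on `ℤ[R_n] = ZMod n →₀ ℤ`. -/
noncomputable def qmul (n : ℕ) (x y : ZMod n →₀ ℤ) : ZMod n →₀ ℤ :=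
  x.sum fun a r => y.sum fun b s => Finsupp.single (dq n a b) (r * s)

/-- Augmentation map. -/
noncomputable def aug (n : ℕ) : (ZMod n →₀ ℤ) →ₗ[ℤ] ℤ :=
  Finsupp.lsum ℤ fun _ => LinearMap.id

/-- `e i = a_i - a_0`. -/
noncomputable def e (n : ℕ) (i : ZMod n) : ZMod n →₀ ℤ :=
  Finsupp.single i 1 - Finsupp.single 0 1

/-- Augmentation ideal. -/
noncomputable def Δ (n : ℕ) : Submodule ℤ (ZMod n →₀ ℤ) := LinearMap.ker (aug n)

noncomputable def Δ2 (n : ℕ) : Submodule ℤ (ZMod n →₀ ℤ) :=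
  Submodule.span ℤ {z | ∃ x ∈ Δ n, ∃ y ∈ Δ n, z = qmul n x y}

noncomputable def Δ3 (n : ℕ) : Submodule ℤ (ZMod n →₀ ℤ) :=
  Submodule.span ℤ {z | ∃ x ∈ Δ2 n, ∃ y ∈ Δ n, z = qmul n x y}

lemma qmul_ee (n : ℕ) (i j : ZMod n) :
    qmul n (e n i) (e n j) = e n (2*j-i) - e n (2*j) - e n (-i) := by
  have hs : ∀ (a b : ZMod n) (r s : ℤ),
      qmul n (Finsupp.single a r) (Finsupp.single b s) = Finsupp.single (dq n a b) (r*s) := by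
    intro a b r s
    simp [qmul, Finsupp.sum_single_index]
  have hsub1 : ∀ (x y z : ZMod n →₀ ℤ), qmul n (x - y) z = qmul n x z - qmul n y z := by
    intro x y z
    simp only [qmul]
    rw [Finsupp.sum_sub_index]
    intro a b1 b2
    rw [← Finsupp.sum_sub]
    congr 1; ext b s
    rw [← Finsupp.single_sub]; ring_nf
  have hsub2 : ∀ (x y z : ZMod n →₀ ℤ), qmul n x (y - z) = qmul n x y - qmul n x z := by
    intro x y z
    simp only [qmul]
    rw [← Finsupp.sum_sub]
    congr 1; ext a r
    rw [Finsupp.sum_sub_index]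
    intro b s1 s2
    rw [← Finsupp.single_sub]; ring_nf
  simp only [e, hsub1, hsub2, hs, dq]
  simp only [mul_zero, sub_zero, mul_one, one_mul, mul_neg, neg_zero, zero_sub]
  abel

lemma e_zero (n : ℕ) : e n 0 = 0 := by simp [e]

/-- In `ℤ[R_8]`, the elements `u_1, …, u_6` lie in the ℤ-span of all products
`e_i · e_j` (`1 ≤ i, j ≤ 7`). -/
theorem stmt_11 :
    let S : Submodule ℤ (ZMod 8 →₀ ℤ) :=
      Submodule.span ℤ {z | ∃ i j : ZMod 8, i ≠ 0 ∧ j ≠ 0 ∧ z = qmul 8 (e 8 i) (e 8 j)}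
    e 8 1 - e 8 2 - e 8 7 ∈ S ∧
    e 8 2 + e 8 6 ∈ S ∧
    e 8 3 - e 8 4 - e 8 7 ∈ S ∧
    e 8 4 + (2 : ℤ) • e 8 6 ∈ S ∧
    e 8 5 - e 8 6 - e 8 7 ∈ S ∧
    (4 : ℤ) • e 8 6 ∈ S := by
  intro S
  have mem : ∀ (i j : ZMod 8), i ≠ 0 → j ≠ 0 → qmul 8 (e 8 i) (e 8 j) ∈ S :=
    fun i j hi hj => Submodule.subset_span ⟨i, j, hi, hj, rfl⟩
  have h11 : qmul 8 (e 8 1) (e 8 1) = e 8 1 - e 8 2 - e 8 7 := by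
    rw [qmul_ee, show (2*(1:ZMod 8)-1) = 1 by decide, show (2*(1:ZMod 8)) = 2 by decide,
      show (-(1:ZMod 8)) = 7 by decide]
  have h21 : qmul 8 (e 8 2) (e 8 1) = -(e 8 2 + e 8 6) := by
    rw [qmul_ee, show (2*(1:ZMod 8)-2) = 0 by decide, show (2*(1:ZMod 8)) = 2 by decide,
      show (-(2:ZMod 8)) = 6 by decide, e_zero]
    abel
  have h12 : qmul 8 (e 8 1) (e 8 2) = e 8 3 - e 8 4 - e 8 7 := by
    rw [qmul_ee, show (2*(2:ZMod 8)-1) = 3 by decide, show (2*(2:ZMod 8)) = 4 by decide,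
      show (-(1:ZMod 8)) = 7 by decide]
  have h61 : qmul 8 (e 8 6) (e 8 1) = e 8 4 - e 8 2 - e 8 2 := by
    rw [qmul_ee, show (2*(1:ZMod 8)-6) = 4 by decide, show (2*(1:ZMod 8)) = 2 by decide,
      show (-(6:ZMod 8)) = 2 by decide]
  have h13 : qmul 8 (e 8 1) (e 8 3) = e 8 5 - e 8 6 - e 8 7 := by
    rw [qmul_ee, show (2*(3:ZMod 8)-1) = 5 by decide, show (2*(3:ZMod 8)) = 6 by decide,
      show (-(1:ZMod 8)) = 7 by decide]
  have h23 : qmul 8 (e 8 2) (e 8 3) = e 8 4 - e 8 6 - e 8 6 := by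
    rw [qmul_ee, show (2*(3:ZMod 8)-2) = 4 by decide, show (2*(3:ZMod 8)) = 6 by decide,
      show (-(2:ZMod 8)) = 6 by decide]
  refine ⟨h11 ▸ mem 1 1 (by decide) (by decide), ?_, h12 ▸ mem 1 2 (by decide) (by decide),
    ?_, h13 ▸ mem 1 3 (by decide) (by decide), ?_⟩
  · have := S.neg_mem (mem 2 1 (by decide) (by decide))
    rwa [h21, neg_neg] at this
  · have heq : e 8 4 + (2:ℤ) • e 8 6
        = qmul 8 (e 8 6) (e 8 1) - (2:ℤ) • qmul 8 (e 8 2) (e 8 1) := by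
      rw [h61, h21]; module
    rw [heq]
    exact sub_mem (mem 6 1 (by decide) (by decide))
      (S.smul_mem 2 (mem 2 1 (by decide) (by decide)))
  · have heq : (4:ℤ) • e 8 6
        = qmul 8 (e 8 6) (e 8 1) - qmul 8 (e 8 2) (e 8 3)
          - (2:ℤ) • qmul 8 (e 8 2) (e 8 1) := by
      rw [h61, h21, h23]; module
    rw [heq]
    exact sub_mem (sub_mem (mem 6 1 (by decide) (by decide))
      (mem 2 3 (by decide) (by decide)))
      (S.smul_mem 2 (mem 2 1 (by decide) (by decide)))
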